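/- Sub-additivity of the floored FRTB expected shortfall without any positivity assumption (claim in Example 2.2 / Remark 2.2): Let E be a real vector space and ρ : E → ℝ a subadditive functional. Define the floored FRTB expected shortfall of a row X : Fin 5 → E by ES⁺_ρ(X) = sqrt(∑_j max(ρ(X j), 0)²). Then for all rows X, Y : Fin 5 → E, ES⁺_ρ(X + Y) ≤ ES⁺_ρ(X) + ES⁺_ρ(Y), where (X + Y) j = X j + Y j. -/

import Mathlib

/-- Sub-additivity of the floored FRTB expected shortfall without any positivity
assumption (Example 2.2 / Remark 2.2). -/
theorem flooredFrtbES_subadditive {E : Type*} [AddCommGroup E] [Module ℝ E]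
    (ρ : E → ℝ)
    (hsub : ∀ x y : E, ρ (x + y) ≤ ρ x + ρ y)
    (X Y : Fin 5 → E) :
    Real.sqrt (∑ j, (max (ρ (X j + Y j)) 0) ^ 2)
      ≤ Real.sqrt (∑ j, (max (ρ (X j)) 0) ^ 2)
        + Real.sqrt (∑ j, (max (ρ (Y j)) 0) ^ 2) := by
  set a : EuclideanSpace ℝ (Fin 5) := WithLp.toLp 2 (fun j => max (ρ (X j)) 0) with ha
  set b : EuclideanSpace ℝ (Fin 5) := WithLp.toLp 2 (fun j => max (ρ (Y j)) 0) with hb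
  have hnorm : ∀ v : EuclideanSpace ℝ (Fin 5),
      ‖v‖ = Real.sqrt (∑ j, (v j) ^ 2) := by
    intro v
    rw [EuclideanSpace.norm_eq]
    congr 1
    exact Finset.sum_congr rfl fun j _ => by rw [Real.norm_eq_abs, sq_abs]
  have h1 : Real.sqrt (∑ j, (max (ρ (X j + Y j)) 0) ^ 2) ≤ ‖a + b‖ := by
    rw [hnorm]
    apply Real.sqrt_le_sqrt
    apply Finset.sum_le_sum
    intro j _
    have h2 : max (ρ (X j + Y j)) 0 ≤ (a + b) j := by
      simp only [ha, hb, PiLp.add_apply, PiLp.toLp_apply]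
      exact max_le (le_trans (hsub _ _) (add_le_add (le_max_left _ _) (le_max_left _ _)))
        (by positivity)
    exact pow_le_pow_left₀ (le_max_right _ _) h2 2
  calc Real.sqrt (∑ j, (max (ρ (X j + Y j)) 0) ^ 2) ≤ ‖a + b‖ := h1
    _ ≤ ‖a‖ + ‖b‖ := norm_add_le a b
    _ = _ := by rw [hnorm, hnorm]
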